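/- arXiv:2403.13059 — 3 statements merged into one kernel-verified Lean document; each statement's English description precedes it below -/
import Mathlib

section
/- Let Ω ⊂ ℝⁿ be open, γ ∈ (0,2), β := 2/(2−γ), and α := 2γ/(2−γ). Let u : Ω → (0,∞) be twice continuously differentiable and satisfy Δu = (γ/2) u^{γ−1} on Ω. Then v := β u^{1/β} is twice continuously differentiable and satisfies ∇v = u^{−γ/2} ∇u and Δv = (α/2) (1 − |∇v|²)/v on Ω. -/
/-- The Laplacian of a function on `ℝⁿ`, as the sum of its pure second
partial derivatives. -/
noncomputable def lap {n : ℕ} (f : EuclideanSpace ℝ (Fin n) → ℝ)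
    (x : EuclideanSpace ℝ (Fin n)) : ℝ :=
  ∑ i : Fin n, fderiv ℝ (fun y => fderiv ℝ f y (EuclideanSpace.single i 1)) x
    (EuclideanSpace.single i 1)

private lemma ap_alg (γ : ℝ) (hγ : γ ∈ Set.Ioo (0:ℝ) 2) (β α t G : ℝ) (hβ : β = 2/(2-γ))
    (hα : α = 2*γ/(2-γ)) (ht : 0 < t) :
    t ^ (-(γ/2)) * ((γ/2) * t^(γ-1)) + (-(γ/2) * t^(-(γ/2)-1)) * G
      = (α/2) * ((1 - (t ^ (-(γ/2)))^2 * G) / (β * t^(1/β))) := by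
  have h2γ : (0:ℝ) < 2 - γ := by linarith [hγ.2]
  have hβpos : 0 < β := by rw [hβ]; positivity
  have h1β : 1/β = 1 - γ/2 := by rw [hβ, one_div_div]; ring
  have hA : 0 < t ^ (-(γ/2)) := Real.rpow_pos_of_pos ht _
  have e1 : t ^ (γ - 1) = t ^ γ / t := by rw [Real.rpow_sub ht, Real.rpow_one]
  have e2 : t ^ (-(γ/2) - 1) = t ^ (-(γ/2)) / t := by rw [Real.rpow_sub ht, Real.rpow_one]
  have e3 : t ^ (1/β) = t ^ (-(γ/2)) * t := by
    rw [h1β, show (1:ℝ) - γ/2 = -(γ/2) + 1 by ring, Real.rpow_add ht, Real.rpow_one]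
  have e4 : (t ^ (-(γ/2)))^2 * t ^ γ = 1 := by
    rw [sq, ← Real.rpow_add ht, ← Real.rpow_add ht,
      show -(γ/2) + -(γ/2) + γ = 0 by ring, Real.rpow_zero]
  have hαβ : α = γ * β := by rw [hα, hβ]; ring
  rw [e1, e2, e3, hαβ]
  set A := t ^ (-(γ/2)) with hAdef
  set B := t ^ γ with hBdef
  field_simp
  linear_combination γ * e4

/-- If `u > 0` solves `Δu = (γ/2) u^{γ−1}` on `Ω`, then `v := β u^{1/β}` (with
`β = 2/(2−γ)`, `α = 2γ/(2−γ)`) is `C²` and satisfies `∇v = u^{−γ/2} ∇u` and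
`Δv = (α/2)(1 − |∇v|²)/v` on `Ω`. -/
theorem modified_equation_of_altPhillips {n : ℕ}
    (Ω : Set (EuclideanSpace ℝ (Fin n))) (hΩ : IsOpen Ω)
    (γ β α : ℝ) (hγ : γ ∈ Set.Ioo (0 : ℝ) 2) (hβ : β = 2 / (2 - γ))
    (hα : α = 2 * γ / (2 - γ))
    (u : EuclideanSpace ℝ (Fin n) → ℝ) (hupos : ∀ x ∈ Ω, 0 < u x)
    (hu : ContDiffOn ℝ 2 u Ω)
    (hPDE : ∀ x ∈ Ω, lap u x = (γ / 2) * u x ^ (γ - 1))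
    (v : EuclideanSpace ℝ (Fin n) → ℝ) (hv : v = fun x => β * u x ^ (1 / β)) :
    ContDiffOn ℝ 2 v Ω ∧ ∀ x ∈ Ω,
      gradient v x = (u x ^ (-(γ / 2))) • gradient u x ∧
      lap v x = (α / 2) * ((1 - ‖gradient v x‖ ^ 2) / v x) := by
  have h2γ : (0:ℝ) < 2 - γ := by linarith [hγ.2]
  have hβpos : 0 < β := by rw [hβ]; positivity
  have h1β : 1/β - 1 = -(γ/2) := by rw [hβ, one_div_div]; ring
  -- pointwise derivative of v
  have hder : ∀ y ∈ Ω, HasFDerivAt v ((u y ^ (-(γ/2))) • fderiv ℝ u y) y := by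
    intro y hy
    have hy0 := hupos y hy
    have hu' : HasFDerivAt u (fderiv ℝ u y) y :=
      ((hu.contDiffAt (hΩ.mem_nhds hy)).differentiableAt two_ne_zero).hasFDerivAt
    have hg : HasDerivAt (fun t : ℝ => β * t ^ (1/β)) (u y ^ (-(γ/2))) (u y) := by
      have h := (Real.hasDerivAt_rpow_const (x := u y) (p := 1/β) (Or.inl hy0.ne')).const_mul β
      rw [h1β] at h
      rw [← mul_assoc, mul_one_div_cancel hβpos.ne', one_mul] at h
      exact h
    rw [hv]
    exact hg.comp_hasFDerivAt y hu'
  have hvC : ContDiffOn ℝ 2 v Ω := by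
    intro x hx
    refine ContDiffAt.contDiffWithinAt ?_
    rw [hv]
    exact contDiffAt_const.mul
      ((hu.contDiffAt (hΩ.mem_nhds hx)).rpow_const_of_ne (hupos x hx).ne')
  refine ⟨hvC, fun x hx => ?_⟩
  have hx0 := hupos x hx
  have hgrad : gradient v x = (u x ^ (-(γ / 2))) • gradient u x := by
    simp only [gradient, (hder x hx).fderiv, map_smul]
  refine ⟨hgrad, ?_⟩
  have hu2 : ContDiffAt ℝ 2 u x := hu.contDiffAt (hΩ.mem_nhds hx)
  have hu'x : HasFDerivAt u (fderiv ℝ u x) x :=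
    (hu2.differentiableAt two_ne_zero).hasFDerivAt
  have hrc : HasFDerivAt (fun y => u y ^ (-(γ/2)))
      ((-(γ/2) * u x ^ (-(γ/2) - 1)) • fderiv ℝ u x) x :=
    (Real.hasDerivAt_rpow_const (x := u x) (p := -(γ/2))
      (Or.inl hx0.ne')).comp_hasFDerivAt x hu'x
  have hterm : ∀ i : Fin n,
      fderiv ℝ (fun y => fderiv ℝ v y (EuclideanSpace.single i 1)) x (EuclideanSpace.single i 1)
        = u x ^ (-(γ/2)) *
            (fderiv ℝ (fun y => fderiv ℝ u y (EuclideanSpace.single i 1)) x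
              (EuclideanSpace.single i 1)) +
          (-(γ/2) * u x ^ (-(γ/2) - 1)) * (fderiv ℝ u x (EuclideanSpace.single i 1))^2 := by
    intro i
    have hEi : (fun y => fderiv ℝ v y (EuclideanSpace.single i 1)) =ᶠ[nhds x]
        (fun y => u y ^ (-(γ/2)) * fderiv ℝ u y (EuclideanSpace.single i 1)) := by
      filter_upwards [hΩ.mem_nhds hx] with y hy
      rw [(hder y hy).fderiv]
      simp [smul_eq_mul]
    have hdf : DifferentiableAt ℝ (fun y => fderiv ℝ u y (EuclideanSpace.single i 1)) x := by
      have h1 : ContDiffAt ℝ 1 (fderiv ℝ u) x :=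
        hu2.fderiv_right (by norm_num)
      exact (h1.differentiableAt one_ne_zero).clm_apply (differentiableAt_const _)
    have hmul : HasFDerivAt (fun y => u y ^ (-(γ/2)) * fderiv ℝ u y (EuclideanSpace.single i 1)) _ x :=
      hrc.mul hdf.hasFDerivAt
    rw [hEi.fderiv_eq, hmul.fderiv]
    simp only [ContinuousLinearMap.add_apply, ContinuousLinearMap.smul_apply, smul_eq_mul]
    ring
  have hlapv : lap v x = u x ^ (-(γ/2)) * lap u x +
      (-(γ/2) * u x ^ (-(γ/2) - 1)) *
        ∑ i : Fin n, (fderiv ℝ u x (EuclideanSpace.single i 1))^2 := by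
    unfold lap
    rw [Finset.mul_sum, Finset.mul_sum, ← Finset.sum_add_distrib]
    exact Finset.sum_congr rfl fun i _ => hterm i
  have hsum : ∑ i : Fin n, (fderiv ℝ u x (EuclideanSpace.single i 1))^2
      = ‖gradient u x‖^2 := by
    have hfg : ∀ i : Fin n, fderiv ℝ u x (EuclideanSpace.single i 1) = gradient u x i := by
      intro i
      have h : (inner ℝ (gradient u x) (EuclideanSpace.single i (1:ℝ)) : ℝ)
          = fderiv ℝ u x (EuclideanSpace.single i 1) := by
        simp only [gradient]
        exact InnerProductSpace.toDual_symm_apply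
      rw [← h, EuclideanSpace.inner_single_right]
      simp
    have hn : ‖gradient u x‖^2 = ∑ i : Fin n, (gradient u x i)^2 := by
      rw [EuclideanSpace.norm_eq, Real.sq_sqrt (by positivity)]
      simp [Real.norm_eq_abs, sq_abs]
    rw [hn]
    exact Finset.sum_congr rfl fun i _ => by rw [hfg i]
  have hnv : ‖gradient v x‖^2 = (u x ^ (-(γ/2)))^2 * ‖gradient u x‖^2 := by
    rw [hgrad, norm_smul, mul_pow, Real.norm_eq_abs, sq_abs]
  rw [hlapv, hsum, hPDE x hx, hnv, hv]
  exact ap_alg γ hγ β α (u x) (‖gradient u x‖^2) hβ hα hx0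
end

section
/- Let Ω ⊂ ℝⁿ be open, v ∈ C³(Ω), ξ ∈ C¹(Ω), and set Φ := ξ ∇v. Then on Ω: (div Φ)² − Tr((DΦ)²) = div[ ξ² ( Δv ∇v − (1/2) ∇(|∇v|²) ) ]. -/
/-- The partial derivative `∂_i f` of a function on `ℝⁿ`. -/
noncomputable def pd {n : ℕ} (i : Fin n) (f : (Fin n → ℝ) → ℝ) (x : Fin n → ℝ) : ℝ :=
  fderiv ℝ f x (Pi.single i 1)

/-- The gradient `∇f` of a function on `ℝⁿ`, in coordinates. -/
noncomputable def gradv {n : ℕ} (f : (Fin n → ℝ) → ℝ) (x : Fin n → ℝ) : Fin n → ℝ :=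
  fun i => pd i f x

/-- The divergence `div F = ∑ᵢ ∂_i F^i` of a vector field on `ℝⁿ`. -/
noncomputable def vdiv {n : ℕ} (F : (Fin n → ℝ) → (Fin n → ℝ)) (x : Fin n → ℝ) : ℝ :=
  ∑ i : Fin n, pd i (fun y => F y i) x

/-- The squared norm of the gradient, `|∇f|² = ∑ᵢ (∂_i f)²`. -/
noncomputable def nsq {n : ℕ} (f : (Fin n → ℝ) → ℝ) (x : Fin n → ℝ) : ℝ :=
  ∑ i : Fin n, (pd i f x) ^ 2

/-- The Laplacian `Δf = ∑ᵢ ∂_{ii} f`. -/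
noncomputable def lapp {n : ℕ} (f : (Fin n → ℝ) → ℝ) (x : Fin n → ℝ) : ℝ :=
  ∑ i : Fin n, pd i (fun y => pd i f y) x

section lemmas
variable {n : ℕ} {f g : (Fin n → ℝ) → ℝ} {x : Fin n → ℝ} {i j : Fin n}

lemma pd_congr (h : f =ᶠ[nhds x] g) : pd i f x = pd i g x := by
  unfold pd; rw [h.fderiv_eq]

lemma pd_mul (hf : DifferentiableAt ℝ f x) (hg : DifferentiableAt ℝ g x) :
    pd i (fun y => f y * g y) x = pd i f x * g x + f x * pd i g x := by
  unfold pd; rw [fderiv_fun_mul hf hg]; simp; ring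

lemma pd_sub (hf : DifferentiableAt ℝ f x) (hg : DifferentiableAt ℝ g x) :
    pd i (fun y => f y - g y) x = pd i f x - pd i g x := by
  unfold pd; rw [fderiv_fun_sub hf hg]; simp

lemma pd_const_mul (c : ℝ) (hf : DifferentiableAt ℝ f x) :
    pd i (fun y => c * f y) x = c * pd i f x := by
  unfold pd; rw [fderiv_const_mul hf]; simp

lemma pd_sum {s : Finset (Fin n)} {F : Fin n → (Fin n → ℝ) → ℝ}
    (h : ∀ j ∈ s, DifferentiableAt ℝ (F j) x) :
    pd i (fun y => ∑ j ∈ s, F j y) x = ∑ j ∈ s, pd i (F j) x := by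
  unfold pd; rw [fderiv_fun_sum h]; simp

lemma pd_sq (hf : DifferentiableAt ℝ f x) :
    pd i (fun y => f y ^ 2) x = 2 * f x * pd i f x := by
  have := pd_mul (i := i) hf hf
  simp only [← sq] at this
  rw [this]; ring

lemma diff_pd (h : ContDiffAt ℝ 2 f x) : DifferentiableAt ℝ (pd j f) x := by
  have h1 : ContDiffAt ℝ 1 (fderiv ℝ f) x := h.fderiv_right (by norm_num)
  exact (h1.differentiableAt one_ne_zero).clm_apply (differentiableAt_const _)

lemma pd_pd_eq_sndFDeriv (h : ContDiffAt ℝ 2 f x) :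
    pd i (fun y => pd j f y) x = fderiv ℝ (fderiv ℝ f) x (Pi.single i 1) (Pi.single j 1) := by
  have h1 : DifferentiableAt ℝ (fderiv ℝ f) x :=
    (h.fderiv_right (m := 1) (by norm_num)).differentiableAt one_ne_zero
  unfold pd
  rw [fderiv_clm_apply h1 (differentiableAt_const _)]
  simp

lemma pd_swap (h : ContDiffAt ℝ 2 f x) :
    pd i (fun y => pd j f y) x = pd j (fun y => pd i f y) x := by
  rw [pd_pd_eq_sndFDeriv h, pd_pd_eq_sndFDeriv h]
  exact (h.isSymmSndFDerivAt (by norm_num)) _ _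

lemma contDiffOn_pd {Ω : Set (Fin n → ℝ)} (hΩ : IsOpen Ω) {m k : ℕ∞}
    (hf : ContDiffOn ℝ k f Ω) (hk : m + 1 ≤ k) : ContDiffOn ℝ m (pd i f) Ω :=
  (hf.fderiv_of_isOpen hΩ (by exact_mod_cast hk)).clm_apply contDiffOn_const

lemma sum2_eq_of_add_swap {n : ℕ} (F G : Fin n → Fin n → ℝ)
    (h : ∀ i j, F i j + F j i = G i j + G j i) :
    ∑ i : Fin n, ∑ j : Fin n, F i j = ∑ i : Fin n, ∑ j : Fin n, G i j := by
  have hF : ∑ i : Fin n, ∑ j : Fin n, F i j = ∑ i : Fin n, ∑ j : Fin n, F j i :=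
    Finset.sum_comm
  have hG : ∑ i : Fin n, ∑ j : Fin n, G i j = ∑ i : Fin n, ∑ j : Fin n, G j i :=
    Finset.sum_comm
  have key : (∑ i : Fin n, ∑ j : Fin n, F i j) + (∑ i : Fin n, ∑ j : Fin n, F j i)
      = (∑ i : Fin n, ∑ j : Fin n, G i j) + (∑ i : Fin n, ∑ j : Fin n, G j i) := by
    simp only [← Finset.sum_add_distrib]
    exact Finset.sum_congr rfl fun i _ => Finset.sum_congr rfl fun j _ => h i j
  linarith

lemma alg {n : ℕ} (c u : Fin n → ℝ) (s : ℝ) (W : Fin n → Fin n → ℝ)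
    (T : Fin n → Fin n → Fin n → ℝ)
    (hW : ∀ a b, W a b = W b a) (hT : ∀ a b, T a b b = T b b a) :
    (∑ i : Fin n, (c i * u i + s * W i i)) ^ 2
      - ∑ i : Fin n, ∑ j : Fin n, (c j * u i + s * W j i) * (c i * u j + s * W i j)
    = ∑ j : Fin n, (2 * s * c j *
          ((∑ i : Fin n, W i i) * u j - (1/2) * ∑ k : Fin n, 2 * (u k * W j k))
        + s ^ 2 * ((∑ i : Fin n, T j i i) * u j + (∑ i : Fin n, W i i) * W j j
            - (1/2) * ∑ k : Fin n, 2 * (W j k * W j k + u k * T j j k))) := by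
  have hL : (∑ i : Fin n, (c i * u i + s * W i i)) ^ 2
      - ∑ i : Fin n, ∑ j : Fin n, (c j * u i + s * W j i) * (c i * u j + s * W i j)
      = ∑ i : Fin n, ∑ j : Fin n,
        ((c i * u i + s * W i i) * (c j * u j + s * W j j)
          - (c j * u i + s * W j i) * (c i * u j + s * W i j)) := by
    rw [sq, Finset.sum_mul_sum, ← Finset.sum_sub_distrib]
    exact Finset.sum_congr rfl fun i _ => (Finset.sum_sub_distrib _ _).symm
  have hR : ∀ j : Fin n, (2 * s * c j *
          ((∑ i : Fin n, W i i) * u j - (1/2) * ∑ k : Fin n, 2 * (u k * W j k))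
        + s ^ 2 * ((∑ i : Fin n, T j i i) * u j + (∑ i : Fin n, W i i) * W j j
            - (1/2) * ∑ k : Fin n, 2 * (W j k * W j k + u k * T j j k)))
      = ∑ k : Fin n, (2 * s * c j * (W k k * u j - u k * W j k)
          + s ^ 2 * (T j k k * u j + W k k * W j j - W j k * W j k - u k * T j j k)) := by
    intro j
    simp only [Finset.sum_mul, Finset.mul_sum, mul_sub, mul_add, sub_mul, add_mul,
      ← Finset.sum_sub_distrib, ← Finset.sum_add_distrib]
    exact Finset.sum_congr rfl fun k _ => by ring
  rw [hL, Finset.sum_congr rfl fun j _ => hR j]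
  refine sum2_eq_of_add_swap _ _ fun i j => ?_
  rw [hW j i, hT i j, hT j i]
  ring

end lemmas

/-- For `v ∈ C³(Ω)`, `ξ ∈ C¹(Ω)` and `Φ := ξ ∇v`, on `Ω` one has
`(div Φ)² − Tr((DΦ)²) = div[ ξ² ( Δv ∇v − ½ ∇(|∇v|²) ) ]`. -/
theorem div_sq_sub_trace_sq_eq_div {n : ℕ} (Ω : Set (Fin n → ℝ)) (hΩ : IsOpen Ω)
    (v ξ : (Fin n → ℝ) → ℝ) (hv : ContDiffOn ℝ 3 v Ω) (hξ : ContDiffOn ℝ 1 ξ Ω)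
    (Φ : (Fin n → ℝ) → (Fin n → ℝ)) (hΦ : Φ = fun x => ξ x • gradv v x) :
    ∀ x ∈ Ω,
      (vdiv Φ x) ^ 2 - ∑ i : Fin n, ∑ j : Fin n,
          pd j (fun y => Φ y i) x * pd i (fun y => Φ y j) x
        = vdiv (fun y => (ξ y) ^ 2 •
            (lapp v y • gradv v y - (1 / 2 : ℝ) • gradv (nsq v) y)) x := by
  subst hΦ
  intro x hx
  have memΩ : Ω ∈ nhds x := hΩ.mem_nhds hx
  -- smoothness
  have hpdv : ∀ k : Fin n, ContDiffOn ℝ 2 (pd k v) Ω := fun k =>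
    contDiffOn_pd hΩ hv (by norm_num)
  have hpdv2 : ∀ k l : Fin n, ContDiffOn ℝ 1 (pd l (pd k v)) Ω := fun k l =>
    contDiffOn_pd hΩ (hpdv k) (by norm_num)
  have hnsq : ContDiffOn ℝ 2 (nsq v) Ω := by
    have : ContDiffOn ℝ 2 (fun y => ∑ k : Fin n, pd k v y ^ 2) Ω :=
      ContDiffOn.sum fun k _ => (hpdv k).pow 2
    exact this
  have hpdnsq : ∀ j : Fin n, ContDiffOn ℝ 1 (pd j (nsq v)) Ω := fun j =>
    contDiffOn_pd hΩ hnsq (by norm_num)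
  -- differentiability at points of Ω
  have dξ : ∀ y ∈ Ω, DifferentiableAt ℝ ξ y := fun y hy =>
    (hξ.differentiableOn one_ne_zero).differentiableAt (hΩ.mem_nhds hy)
  have dv1 : ∀ (k : Fin n), ∀ y ∈ Ω, DifferentiableAt ℝ (pd k v) y := fun k y hy =>
    ((hpdv k).differentiableOn (by norm_num)).differentiableAt (hΩ.mem_nhds hy)
  have dv2 : ∀ (k l : Fin n), ∀ y ∈ Ω, DifferentiableAt ℝ (pd l (pd k v)) y := fun k l y hy =>
    ((hpdv2 k l).differentiableOn one_ne_zero).differentiableAt (hΩ.mem_nhds hy)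
  have dnsq1 : ∀ (j : Fin n), ∀ y ∈ Ω, DifferentiableAt ℝ (pd j (nsq v)) y := fun j y hy =>
    ((hpdnsq j).differentiableOn one_ne_zero).differentiableAt (hΩ.mem_nhds hy)
  have dlapp : ∀ y ∈ Ω, DifferentiableAt ℝ (lapp v) y := by
    intro y hy
    have : DifferentiableAt ℝ (fun z => ∑ i : Fin n, pd i (pd i v) z) y :=
      DifferentiableAt.fun_sum fun i _ => dv2 i i y hy
    exact this
  -- symmetry of second derivatives on Ω
  have cv2 : ∀ y ∈ Ω, ContDiffAt ℝ 2 v y := fun y hy =>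
    (hv.contDiffAt (hΩ.mem_nhds hy)).of_le (by norm_num)
  have symW : ∀ (a b : Fin n), ∀ y ∈ Ω, pd a (pd b v) y = pd b (pd a v) y := fun a b y hy =>
    pd_swap (cv2 y hy)
  -- third derivative symmetry at x
  have symT : ∀ a b : Fin n,
      pd a (pd b (pd b v)) x = pd b (pd b (pd a v)) x := by
    intro a b
    have h1 : pd a (pd b (pd b v)) x = pd b (pd a (pd b v)) x :=
      pd_swap ((hpdv b).contDiffAt memΩ)
    have h2 : pd b (pd a (pd b v)) x = pd b (pd b (pd a v)) x := by
      apply pd_congr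
      filter_upwards [memΩ] with y hy
      exact symW a b y hy
    rw [h1, h2]
  -- derivative of nsq near x
  have hNfun : ∀ j : Fin n, pd j (nsq v) =ᶠ[nhds x]
      fun y => ∑ k : Fin n, 2 * (pd k v y * pd j (pd k v) y) := by
    intro j
    filter_upwards [memΩ] with y hy
    have e0 : pd j (nsq v) y = pd j (fun z => ∑ k : Fin n, pd k v z ^ 2) y := rfl
    rw [e0, pd_sum fun k _ => (dv1 k y hy).fun_pow 2]
    refine Finset.sum_congr rfl fun k _ => ?_
    rw [pd_sq (dv1 k y hy)]; ring
  -- values at x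
  have hdivΦ : vdiv (fun z => ξ z • gradv v z) x
      = ∑ i : Fin n, (pd i ξ x * pd i v x + ξ x * pd i (pd i v) x) := by
    unfold vdiv
    refine Finset.sum_congr rfl fun i _ => ?_
    have e : (fun y => (ξ y • gradv v y) i) = fun y => ξ y * pd i v y := by
      funext y; simp [gradv]
    rw [show pd i (fun y => (fun z => ξ z • gradv v z) y i) x
        = pd i (fun y => ξ y * pd i v y) x from by rw [e]]
    rw [pd_mul (dξ x hx) (dv1 i x hx)]
  have hΦij : ∀ i j : Fin n, pd j (fun y => (fun z => ξ z • gradv v z) y i) x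
      = pd j ξ x * pd i v x + ξ x * pd j (pd i v) x := by
    intro i j
    have e : (fun y => (ξ y • gradv v y) i) = fun y => ξ y * pd i v y := by
      funext y; simp [gradv]
    rw [show pd j (fun y => (fun z => ξ z • gradv v z) y i) x
        = pd j (fun y => ξ y * pd i v y) x from by rw [e]]
    rw [pd_mul (dξ x hx) (dv1 i x hx)]
  -- the RHS
  have hRHS : vdiv (fun y => (ξ y) ^ 2 •
        (lapp v y • gradv v y - (1 / 2 : ℝ) • gradv (nsq v) y)) x
      = ∑ j : Fin n, (2 * ξ x * pd j ξ x
            * ((∑ i : Fin n, pd i (pd i v) x) * pd j v x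
              - (1/2) * ∑ k : Fin n, 2 * (pd k v x * pd j (pd k v) x))
          + ξ x ^ 2 * ((∑ i : Fin n, pd j (pd i (pd i v)) x) * pd j v x
              + (∑ i : Fin n, pd i (pd i v) x) * pd j (pd j v) x
              - (1/2) * ∑ k : Fin n, 2 * (pd j (pd k v) x * pd j (pd k v) x
                  + pd k v x * pd j (pd j (pd k v)) x))) := by
    unfold vdiv
    refine Finset.sum_congr rfl fun j _ => ?_
    have e : (fun y => ((ξ y) ^ 2 •
          (lapp v y • gradv v y - (1 / 2 : ℝ) • gradv (nsq v) y)) j)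
        = fun y => ξ y ^ 2 * (lapp v y * pd j v y - (1/2) * pd j (nsq v) y) := by
      funext y; simp [gradv]
    rw [show pd j (fun y => ((fun z => (ξ z) ^ 2 •
          (lapp v z • gradv v z - (1 / 2 : ℝ) • gradv (nsq v) z)) y j)) x
        = pd j (fun y => ξ y ^ 2 * (lapp v y * pd j v y - (1/2) * pd j (nsq v) y)) x
        from by rw [e]]
    have dinner : DifferentiableAt ℝ
        (fun y => lapp v y * pd j v y - (1/2) * pd j (nsq v) y) x :=
      ((dlapp x hx).mul (dv1 j x hx)).sub ((differentiableAt_const _).mul (dnsq1 j x hx))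
    rw [pd_mul ((dξ x hx).fun_pow 2) dinner]
    rw [pd_sq (dξ x hx)]
    rw [pd_sub ((dlapp x hx).fun_mul (dv1 j x hx))
      ((differentiableAt_const _).fun_mul (dnsq1 j x hx))]
    rw [pd_mul (dlapp x hx) (dv1 j x hx)]
    rw [pd_const_mul _ (dnsq1 j x hx)]
    -- pd j (lapp v) x
    have hlap : pd j (lapp v) x = ∑ i : Fin n, pd j (pd i (pd i v)) x := by
      have e0 : pd j (lapp v) x = pd j (fun y => ∑ i : Fin n, pd i (pd i v) y) x := rfl
      rw [e0, pd_sum fun i _ => dv2 i i x hx]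
    -- lapp v x value
    have hlapx : lapp v x = ∑ i : Fin n, pd i (pd i v) x := rfl
    -- pd j (nsq v) x value
    have hNx : pd j (nsq v) x = ∑ k : Fin n, 2 * (pd k v x * pd j (pd k v) x) :=
      (hNfun j).self_of_nhds
    -- pd j (pd j (nsq v)) x value
    have hNNx : pd j (pd j (nsq v)) x
        = ∑ k : Fin n, 2 * (pd j (pd k v) x * pd j (pd k v) x
            + pd k v x * pd j (pd j (pd k v)) x) := by
      rw [pd_congr (hNfun j)]
      rw [pd_sum fun k _ => ((differentiableAt_const (2:ℝ)).fun_mul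
        ((dv1 k x hx).fun_mul (dv2 k j x hx)))]
      refine Finset.sum_congr rfl fun k _ => ?_
      rw [pd_const_mul _ ((dv1 k x hx).fun_mul (dv2 k j x hx))]
      rw [pd_mul (dv1 k x hx) (dv2 k j x hx)]
    rw [hlap, hlapx, hNx, hNNx]
  rw [hdivΦ, hRHS]
  have hmid : (∑ i : Fin n, ∑ j : Fin n,
        pd j (fun y => (fun z => ξ z • gradv v z) y i) x
          * pd i (fun y => (fun z => ξ z • gradv v z) y j) x)
      = ∑ i : Fin n, ∑ j : Fin n,
        (pd j ξ x * pd i v x + ξ x * pd j (pd i v) x)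
          * (pd i ξ x * pd j v x + ξ x * pd i (pd j v) x) :=
    Finset.sum_congr rfl fun i _ => Finset.sum_congr rfl fun j _ => by
      rw [hΦij i j, hΦij j i]
  rw [hmid]
  exact alg (fun i => pd i ξ x) (fun i => pd i v x) (ξ x)
    (fun a b => pd a (pd b v) x) (fun a b c => pd a (pd b (pd c v)) x)
    (fun a b => symW a b x hx) symT
end

section
/- Let α ≥ 0, let ν ∈ ℝⁿ be a unit vector, x₀ ∈ ℝⁿ, and let v be twice continuously differentiable on an open neighborhood U of x₀ with v(x₀) = 0 and ∇v(x₀) = −ν. Suppose there is t₀ > 0 such that for every t ∈ (0, t₀): x₀ − tν ∈ U, v(x₀ − tν) > 0, and Δv(x₀ − tν) = (α/2) (1 − |∇v(x₀ − tν)|²) / v(x₀ − tν). Then lim_{t → 0⁺} Δv(x₀ − tν) = −α ⟨ν, D²v(x₀) ν⟩. -/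
open Topology

open InnerProductSpace

/-- If `v` is `C²` near a free boundary point `x₀` with `v(x₀) = 0`, `∇v(x₀) = −ν`,
`|ν| = 1`, and `v` solves `Δv = (α/2)(1 − |∇v|²)/v` on the inward normal segment
`{x₀ − tν : 0 < t < t₀}` where `v > 0`, then `Δv(x₀ − tν) → −α v_{νν}(x₀)` as `t → 0⁺`. -/
theorem laplacian_limit_at_free_boundary {n : ℕ} (α : ℝ) (hα : 0 ≤ α)
    (ν x₀ : EuclideanSpace ℝ (Fin n)) (hν : ‖ν‖ = 1)
    (U : Set (EuclideanSpace ℝ (Fin n))) (hU : IsOpen U) (hx₀ : x₀ ∈ U)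
    (v : EuclideanSpace ℝ (Fin n) → ℝ) (hv : ContDiffOn ℝ 2 v U)
    (hv0 : v x₀ = 0) (hgrad : gradient v x₀ = -ν)
    (t₀ : ℝ) (ht₀ : 0 < t₀)
    (h : ∀ t ∈ Set.Ioo (0 : ℝ) t₀,
      x₀ - t • ν ∈ U ∧ 0 < v (x₀ - t • ν) ∧
      lap v (x₀ - t • ν) =
        (α / 2) * ((1 - ‖gradient v (x₀ - t • ν)‖ ^ 2) / v (x₀ - t • ν))) :
    Filter.Tendsto (fun t : ℝ => lap v (x₀ - t • ν)) (𝓝[>] (0 : ℝ))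
      (𝓝 (-α * fderiv ℝ (fun y => fderiv ℝ v y ν) x₀ ν)) := by
  set c : ℝ := fderiv ℝ (fun y => fderiv ℝ v y ν) x₀ ν with hc
  have hvx : ContDiffAt ℝ 2 v x₀ := hv.contDiffAt (hU.mem_nhds hx₀)
  have hvd : DifferentiableAt ℝ v x₀ := hvx.differentiableAt (by norm_num)
  have hγ0 : x₀ - (0 : ℝ) • ν = x₀ := by simp
  -- derivative of the curve
  have hγ : HasDerivAt (fun s : ℝ => x₀ - s • ν) (-ν) 0 := by
    simpa using ((hasDerivAt_id (0 : ℝ)).smul_const ν).const_sub x₀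
  -- derivative of g = v ∘ γ at 0 is 1
  have hg : HasDerivAt (fun t : ℝ => v (x₀ - t • ν)) 1 0 := by
    have h1 : HasDerivAt (fun t : ℝ => v (x₀ - t • ν)) (fderiv ℝ v x₀ (-ν)) 0 := by
      have h0 : HasFDerivAt v (fderiv ℝ v x₀) (x₀ - (0:ℝ) • ν) := by rw [hγ0]; exact hvd.hasFDerivAt
      exact h0.comp_hasDerivAt 0 hγ
    have hval : fderiv ℝ v x₀ (-ν) = 1 := by
      have : (⟪gradient v x₀, -ν⟫_ℝ) = fderiv ℝ v x₀ (-ν) := by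
        rw [gradient]; exact InnerProductSpace.toDual_symm_apply
      rw [← this, hgrad, inner_neg_neg, real_inner_self_eq_norm_sq, hν]; norm_num
    rwa [hval] at h1
  -- second derivative data
  have hD1 : ContDiffAt ℝ 1 (fderiv ℝ v) x₀ := hvx.fderiv_right (by norm_num)
  have hDd : DifferentiableAt ℝ (fderiv ℝ v) x₀ := hD1.differentiableAt (by norm_num)
  set D : EuclideanSpace ℝ (Fin n) →L[ℝ] (EuclideanSpace ℝ (Fin n) →L[ℝ] ℝ) := fderiv ℝ (fderiv ℝ v) x₀ with hDdef
  have hcD : c = D ν ν := by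
    have hL := (ContinuousLinearMap.apply ℝ ℝ ν).hasFDerivAt.comp x₀ hDd.hasFDerivAt
    have : fderiv ℝ (fun y => fderiv ℝ v y ν) x₀
        = (ContinuousLinearMap.apply ℝ ℝ ν).comp D := hL.fderiv
    rw [hc, this]; rfl
  -- derivative of G = gradient v ∘ γ
  have hG : HasDerivAt (fun t : ℝ => gradient v (x₀ - t • ν))
      ((toDual ℝ (EuclideanSpace ℝ (Fin n))).symm (D (-ν))) 0 := by
    have h1 : HasDerivAt (fun t : ℝ => fderiv ℝ v (x₀ - t • ν)) (D (-ν)) 0 := by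
      have h0 : HasFDerivAt (fderiv ℝ v) D (x₀ - (0:ℝ) • ν) := by rw [hγ0]; exact hDd.hasFDerivAt
      exact h0.comp_hasDerivAt 0 hγ
    have h2 := ((toDual ℝ (EuclideanSpace ℝ (Fin n))).symm.toContinuousLinearEquiv.toContinuousLinearMap
      ).hasFDerivAt.comp_hasDerivAt 0 h1
    exact h2
  -- derivative of q = 1 - ‖G‖² at 0 is -2c
  have hq : HasDerivAt (fun t : ℝ => 1 - ‖gradient v (x₀ - t • ν)‖ ^ 2) (-(2 * c)) 0 := by
    have hp := (hG.inner ℝ hG).const_sub 1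
    have e1 : (fun t : ℝ => 1 - ⟪gradient v (x₀ - t • ν), gradient v (x₀ - t • ν)⟫_ℝ)
        = fun t : ℝ => 1 - ‖gradient v (x₀ - t • ν)‖ ^ 2 := by
      funext t; rw [real_inner_self_eq_norm_sq]
    rw [e1] at hp
    have hG0 : gradient v (x₀ - (0:ℝ) • ν) = -ν := by rw [hγ0]; exact hgrad
    have hval : ⟪(toDual ℝ (EuclideanSpace ℝ (Fin n))).symm (D (-ν)), (-ν : EuclideanSpace ℝ (Fin n))⟫_ℝ = c := by
      rw [InnerProductSpace.toDual_symm_apply]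
      simp [hcD]
    rw [hG0] at hp
    have hval' : ⟪(-ν : EuclideanSpace ℝ (Fin n)), (toDual ℝ (EuclideanSpace ℝ (Fin n))).symm (D (-ν))⟫_ℝ = c := by
      rw [real_inner_comm]; exact hval
    have heq2 : -(⟪(-ν : EuclideanSpace ℝ (Fin n)), (toDual ℝ (EuclideanSpace ℝ (Fin n))).symm (D (-ν))⟫_ℝ
        + ⟪(toDual ℝ (EuclideanSpace ℝ (Fin n))).symm (D (-ν)), (-ν : EuclideanSpace ℝ (Fin n))⟫_ℝ) = -(2 * c) := by
      rw [hval', hval]; ring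
    rwa [heq2] at hp
  -- slope limits
  have hq0 : (1 : ℝ) - ‖gradient v (x₀ - (0:ℝ) • ν)‖ ^ 2 = 0 := by
    rw [hγ0, hgrad, norm_neg, hν]; norm_num
  have hslopeq : Filter.Tendsto
      (fun t : ℝ => (1 - ‖gradient v (x₀ - t • ν)‖ ^ 2) / t) (𝓝[>] (0:ℝ)) (𝓝 (-(2 * c))) := by
    have := hasDerivAt_iff_tendsto_slope.mp hq
    refine (this.mono_left (nhdsWithin_mono _ ?_)).congr (fun t => ?_)
    · intro t ht; exact ne_of_gt ht
    · simp only [slope_def_field, sub_zero, hq0]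
  have hslopeg : Filter.Tendsto
      (fun t : ℝ => v (x₀ - t • ν) / t) (𝓝[>] (0:ℝ)) (𝓝 1) := by
    have := hasDerivAt_iff_tendsto_slope.mp hg
    refine (this.mono_left (nhdsWithin_mono _ ?_)).congr (fun t => ?_)
    · intro t ht; exact ne_of_gt ht
    · simp only [slope_def_field, sub_zero, hγ0, hv0]
  -- combine
  have hmain : Filter.Tendsto
      (fun t : ℝ => (α / 2) * (((1 - ‖gradient v (x₀ - t • ν)‖ ^ 2) / t)
        / (v (x₀ - t • ν) / t))) (𝓝[>] (0:ℝ)) (𝓝 (-α * c)) := by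
    have := (hslopeq.div hslopeg one_ne_zero).const_mul (α / 2)
    convert this using 2 <;> simp only [Pi.div_apply, div_one] <;> ring
  refine hmain.congr' ?_
  filter_upwards [Ioo_mem_nhdsGT_of_mem (Set.left_mem_Ico.mpr ht₀)] with t ht
  obtain ⟨hmem, hpos, heq⟩ := h t ht
  have htne : (t : ℝ) ≠ 0 := ne_of_gt ht.1
  rw [heq, div_div_div_cancel_right₀ htne]
end
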